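/- For all natural numbers n, m: (n+m)! = Σ_{r=0}^{n} Σ_{j=0}^{m} Σ_{k=0}^{n+m} c(m,j) · C(r, k−j) · c(n,r) · m^{r−k+j}, where C(r, k−j) is the ordinary binomial coefficient, interpreted as 0 when j > k or k − j > r, and the exponent r − k + j is the corresponding nonnegative integer when C(r,k−j) ≠ 0. -/
import Mathlib

/-- The unsigned Stirling numbers of the first kind `c(n,k)`. -/
def stirling1 : ℕ → ℕ → ℕ
  | 0, 0 => 1
  | 0, _ + 1 => 0
  | _ + 1, 0 => 0
  | n + 1, k + 1 =>
    if k + 1 ≤ n + 1 then stirling1 n k + n * stirling1 n (k + 1) else 0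

lemma stirling1_eq_zero : ∀ {n k : ℕ}, n < k → stirling1 n k = 0
  | 0, _ + 1, _ => rfl
  | n + 1, k + 1, h => by
    simp only [stirling1, if_neg (by omega : ¬ k + 1 ≤ n + 1)]

lemma mul_stirling1_zero (n : ℕ) : n * stirling1 n 0 = 0 := by
  cases n with
  | zero => simp
  | succ n => simp [stirling1]

lemma sum_stirling1 (n x : ℕ) :
    ∑ k ∈ Finset.range (n + 1), stirling1 n k * x ^ k = x.ascFactorial n := by
  induction n with
  | zero => simp [stirling1]
  | succ n ih =>
    rw [Finset.sum_range_succ' (fun k => stirling1 (n + 1) k * x ^ k)]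
    have h1 : ∀ k ∈ Finset.range (n + 1),
        stirling1 (n + 1) (k + 1) * x ^ (k + 1)
          = stirling1 n k * x ^ k * x + n * (stirling1 n (k + 1) * x ^ (k + 1)) := by
      intro k hk
      simp only [stirling1, if_pos (by simp at hk; omega : k + 1 ≤ n + 1)]
      ring
    rw [Finset.sum_congr rfl h1, Finset.sum_add_distrib, ← Finset.sum_mul, ih,
      ← Finset.mul_sum]
    have h3 : n * (∑ k ∈ Finset.range (n + 1), stirling1 n (k + 1) * x ^ (k + 1))
        = n * x.ascFactorial n := by
      have := Finset.sum_range_succ' (fun k => stirling1 n k * x ^ k) (n + 1)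
      rw [Finset.sum_range_succ, stirling1_eq_zero (Nat.lt_succ_self n)] at this
      simp only [zero_mul, add_zero, pow_zero, mul_one] at this
      have h4 := congrArg (n * ·) this
      simp only [mul_add, mul_stirling1_zero, add_zero, ih] at h4
      exact h4.symm
    rw [h3]
    have h0 : stirling1 (n + 1) 0 = 0 := rfl
    rw [h0, Nat.ascFactorial_succ]
    ring

lemma stirlingInnerSum (r j m N : ℕ) (h : j + r < N) :
    ∑ k ∈ Finset.range N,
      (if j ≤ k then r.choose (k - j) * m ^ (r - (k - j)) else 0) = (m + 1) ^ r := by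
  rw [Finset.range_eq_Ico,
    ← Finset.sum_Ico_consecutive _ (Nat.zero_le j) (by omega : j ≤ N)]
  rw [Finset.sum_eq_zero (fun k hk => by
    rw [if_neg]; rw [Finset.mem_Ico] at hk; omega), zero_add]
  rw [Finset.sum_Ico_eq_sum_range]
  have h1 : ∀ i ∈ Finset.range (N - j),
      (if j ≤ j + i then r.choose (j + i - j) * m ^ (r - (j + i - j)) else 0)
        = r.choose i * m ^ (r - i) := by
    intro i _
    rw [if_pos (Nat.le_add_right j i), Nat.add_sub_cancel_left]
  rw [Finset.sum_congr rfl h1]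
  rw [← Finset.sum_subset (Finset.range_subset_range.mpr (by omega : r + 1 ≤ N - j))
    (fun i _ hi => by
      rw [Nat.choose_eq_zero_of_lt (by simpa using hi), zero_mul])]
  rw [add_comm m 1, add_pow 1 m r]
  exact Finset.sum_congr rfl (fun i hi => by
    rw [one_pow, one_mul]
    push_cast
    ring)

theorem mezo_dual_spivey_second (n m : ℕ) :
    (n + m).factorial
    = ∑ r ∈ Finset.range (n + 1), ∑ j ∈ Finset.range (m + 1),
        ∑ k ∈ Finset.range (n + m + 1),
        stirling1 m j *
          (if j ≤ k then r.choose (k - j) * m ^ (r - (k - j)) else 0) *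
          stirling1 n r := by
  have key : ∀ r ∈ Finset.range (n + 1), ∀ j ∈ Finset.range (m + 1),
      ∑ k ∈ Finset.range (n + m + 1),
        stirling1 m j *
          (if j ≤ k then r.choose (k - j) * m ^ (r - (k - j)) else 0) *
          stirling1 n r
      = stirling1 m j * ((m + 1) ^ r * stirling1 n r) := by
    intro r hr j hj
    simp only [Finset.mem_range] at hr hj
    rw [← stirlingInnerSum r j m (n + m + 1) (by omega), Finset.sum_mul, Finset.mul_sum]
    exact Finset.sum_congr rfl (fun k _ => by ring)
  rw [Finset.sum_congr rfl (fun r hr => Finset.sum_congr rfl (key r hr))]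
  have hm : ∑ j ∈ Finset.range (m + 1), stirling1 m j = m.factorial := by
    have := sum_stirling1 m 1
    simpa [Nat.one_ascFactorial] using this
  have : ∀ r, ∑ j ∈ Finset.range (m + 1),
      stirling1 m j * ((m + 1) ^ r * stirling1 n r)
      = m.factorial * ((m + 1) ^ r * stirling1 n r) := by
    intro r
    rw [← Finset.sum_mul, hm]
  rw [Finset.sum_congr rfl (fun r _ => this r), ← Finset.mul_sum]
  have hsum : ∑ r ∈ Finset.range (n + 1), (m + 1) ^ r * stirling1 n r
      = (m + 1).ascFactorial n := by
    rw [← sum_stirling1 n (m + 1)]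
    exact Finset.sum_congr rfl (fun r _ => mul_comm _ _)
  rw [hsum, Nat.factorial_mul_ascFactorial, Nat.add_comm]
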